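/- Resource similarity ≈ (defined by r ≈ s iff (r+w) ∼ (s+w) for all markings w) is the largest congruence on markings included in bisimilarity ∼. -/
import Mathlib


/-- A labeled Petri net: places `P`, transitions `T`, action labels `Act`. -/
structure LPN (P T Act : Type) where
  pre : T → P → ℕ
  post : T → P → ℕ
  lab : T → Act

variable {P T Act : Type}

/-- Firing relation: `M` fires `t` yielding `M'`. -/
def Fires (N : LPN P T Act) (M : P → ℕ) (t : T) (M' : P → ℕ) : Prop :=
  N.pre t ≤ M ∧ M' = fun p => M p - N.pre t p + N.post t p

/-- `R` satisfies the (ordinary) transfer property w.r.t. `R'`. -/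
def Transfer (N : LPN P T Act) (R R' : (P → ℕ) → (P → ℕ) → Prop) : Prop :=
  ∀ M₁ M₂, R M₁ M₂ → ∀ t M₁', Fires N M₁ t M₁' →
    ∃ u M₂', N.lab u = N.lab t ∧ Fires N M₂ u M₂' ∧ R' M₁' M₂'

/-- `R` is a bisimulation. -/
def IsBisim (N : LPN P T Act) (R : (P → ℕ) → (P → ℕ) → Prop) : Prop :=
  Transfer N R R ∧ Transfer N (fun a b => R b a) (fun a b => R b a)

/-- Bisimilarity `∼`. -/
def Bisim (N : LPN P T Act) (M₁ M₂ : P → ℕ) : Prop :=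
  ∃ R, IsBisim N R ∧ R M₁ M₂

/-- A congruence on markings: an equivalence compatible with addition. -/
def IsCongruence (ρ : (P → ℕ) → (P → ℕ) → Prop) : Prop :=
  Equivalence ρ ∧ ∀ r₁ r₂ s, ρ r₁ r₂ → ρ (r₁ + s) (r₂ + s)

/-- Resource similarity `≈`. -/
def ResSim (N : LPN P T Act) (r s : P → ℕ) : Prop :=
  ∀ w, Bisim N (r + w) (s + w)

/-- `R` satisfies the resource transfer property w.r.t. `R'`. -/
def ResTransfer (N : LPN P T Act) (R R' : (P → ℕ) → (P → ℕ) → Prop) : Prop :=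
  ∀ r s, R r s → ∀ t r', Fires N (fun p => r p + (N.pre t p - r p)) t r' →
    ∃ u s', N.lab u = N.lab t ∧
      Fires N (fun p => s p + (N.pre t p - r p)) u s' ∧ R' r' s'

/-- `R` is a resource bisimulation. -/
def IsResBisim (N : LPN P T Act) (R : (P → ℕ) → (P → ℕ) → Prop) : Prop :=
  ResTransfer N R R ∧ ResTransfer N (fun a b => R b a) (fun a b => R b a)

/-- Resource bisimilarity `≃`. -/
def ResBisim (N : LPN P T Act) (r s : P → ℕ) : Prop :=
  ∃ R, IsResBisim N R ∧ R r s

/-- Stratified bisimilarity `∼ᵢ`. -/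
def Strat (N : LPN P T Act) : ℕ → (P → ℕ) → (P → ℕ) → Prop
  | 0, _, _ => True
  | i + 1, M₁, M₂ =>
      (∀ t M₁', Fires N M₁ t M₁' →
        ∃ u M₂', N.lab u = N.lab t ∧ Fires N M₂ u M₂' ∧ Strat N i M₁' M₂') ∧
      (∀ t M₂', Fires N M₂ t M₂' →
        ∃ u M₁', N.lab u = N.lab t ∧ Fires N M₁ u M₁' ∧ Strat N i M₂' M₁')

/-- Stratified resource bisimilarity `≃ᵢ`. -/
def StratRes (N : LPN P T Act) : ℕ → (P → ℕ) → (P → ℕ) → Prop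
  | 0, _, _ => True
  | i + 1, r, s =>
      (∀ t r', Fires N (fun p => r p + (N.pre t p - r p)) t r' →
        ∃ u s', N.lab u = N.lab t ∧
          Fires N (fun p => s p + (N.pre t p - r p)) u s' ∧ StratRes N i r' s') ∧
      (∀ t s', Fires N (fun p => s p + (N.pre t p - s p)) t s' →
        ∃ u r', N.lab u = N.lab t ∧
          Fires N (fun p => r p + (N.pre t p - s p)) u r' ∧ StratRes N i s' r')

/-- The equivalence level: the largest `i` with `r ≃ᵢ s` (`⊤` = ω if all `i`). -/
noncomputable def eqlev (N : LPN P T Act) (r s : P → ℕ) : ℕ∞ :=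
  sSup {n : ℕ∞ | ∃ i : ℕ, n = (i : ℕ∞) ∧ StratRes N i r s}

lemma bisim_refl (N : LPN P T Act) (M : P → ℕ) : Bisim N M M := by
  refine ⟨Eq, ⟨?_, ?_⟩, rfl⟩ <;>
  · intro M₁ M₂ h t M₁' hf
    exact ⟨t, M₁', rfl, h ▸ hf, rfl⟩

lemma bisim_symm {N : LPN P T Act} {M₁ M₂ : P → ℕ} (h : Bisim N M₁ M₂) :
    Bisim N M₂ M₁ := by
  obtain ⟨R, ⟨h1, h2⟩, hr⟩ := h
  exact ⟨fun a b => R b a, ⟨h2, h1⟩, hr⟩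

lemma bisim_trans {N : LPN P T Act} {M₁ M₂ M₃ : P → ℕ}
    (h : Bisim N M₁ M₂) (h' : Bisim N M₂ M₃) : Bisim N M₁ M₃ := by
  obtain ⟨R, ⟨h1, h2⟩, hr⟩ := h
  obtain ⟨S, ⟨g1, g2⟩, hs⟩ := h'
  refine ⟨fun a c => ∃ b, R a b ∧ S b c, ⟨?_, ?_⟩, M₂, hr, hs⟩
  · rintro a c ⟨b, hab, hbc⟩ t a' hf
    obtain ⟨u, b', hlab, hfb, hab'⟩ := h1 a b hab t a' hf
    obtain ⟨v, c', hlab', hfc, hbc'⟩ := g1 b c hbc u b' hfb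
    exact ⟨v, c', hlab'.trans hlab, hfc, b', hab', hbc'⟩
  · rintro a c ⟨b, hcb, hba⟩ t a' hf
    obtain ⟨u, b', hlab, hfb, hba'⟩ := g2 a b hba t a' hf
    obtain ⟨v, c', hlab', hfc, hcb'⟩ := h2 b c hcb u b' hfb
    exact ⟨v, c', hlab'.trans hlab, hfc, b', hcb', hba'⟩

/-- Resource similarity `≈` is the largest congruence on markings included in `∼`. -/
theorem resSim_largest_congruence (N : LPN P T Act) :
    IsCongruence (ResSim N) ∧ (∀ r s : P → ℕ, ResSim N r s → Bisim N r s) ∧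
      ∀ ρ, IsCongruence ρ → (∀ r s : P → ℕ, ρ r s → Bisim N r s) →
        ∀ r s, ρ r s → ResSim N r s := by
  refine ⟨⟨⟨fun r w => bisim_refl N _, fun h w => bisim_symm (h w),
      fun h h' w => bisim_trans (h w) (h' w)⟩, ?_⟩, ?_, ?_⟩
  · intro r₁ r₂ s h w
    have := h (s + w)
    simpa [add_assoc] using this
  · intro r s h
    have := h 0
    simpa using this
  · intro ρ ⟨_, hcong⟩ hsub r s h w
    exact hsub _ _ (hcong r s w h)
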